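/- Let A be an n×n Hermitian positive semi-definite matrix with entries a_{jk}. Then the matrix with entries |a_{jk}|² − (1/n) a_{jj} a_{kk} is positive semi-definite. -/

import Mathlib

open ComplexOrder Matrix

theorem stmt_13 (n : ℕ) (hn : 0 < n) (A : Matrix (Fin n) (Fin n) ℂ)
    (hA : A.PosSemidef) :
    (Matrix.of fun j k : Fin n =>
      ((‖A j k‖ ^ 2 : ℝ) : ℂ) - (1 / n : ℂ) * A j j * A k k).PosSemidef := by
  obtain ⟨B, hB⟩ : ∃ B : Matrix (Fin n) (Fin n) ℂ, A = Bᴴ * B := by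
    open scoped MatrixOrder Matrix.Norms.L2Operator in
    exact CStarAlgebra.nonneg_iff_eq_star_mul_self.mp hA.nonneg
  have herm := hA.isHermitian
  refine Matrix.PosSemidef.of_dotProduct_mulVec_nonneg ?_ ?_
  · ext j k
    simp only [Matrix.conjTranspose_apply, Matrix.of_apply, star_sub, star_mul']
    rw [← herm.apply j k, ← herm.apply j j, ← herm.apply k k]
    simp only [Complex.star_def, _root_.map_mul, Complex.conj_conj, ← Complex.ofReal_pow,
      Complex.conj_ofReal, norm_mul, Complex.norm_conj]
    have h1 : (starRingEnd ℂ) (A j j) = A j j := herm.apply j j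
    have h2 : (starRingEnd ℂ) (A k k) = A k k := herm.apply k k
    have h3 : (starRingEnd ℂ) (1/(n:ℂ)) = 1/(n:ℂ) := by simp
    rw [h1, h2, h3]
    ring
  · intro x
    set T : Matrix (Fin n) (Fin n) ℂ := B * Matrix.diagonal x * Bᴴ with hTdef
    have hTH : Tᴴ = B * Matrix.diagonal (star x) * Bᴴ := by
      simp [hTdef, Matrix.conjTranspose_mul, Matrix.diagonal_conjTranspose, Matrix.mul_assoc]
    -- trace T
    have htrace : T.trace = ∑ j, x j * A j j := by
      rw [hTdef, Matrix.trace_mul_comm, ← Matrix.mul_assoc, ← hB]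
      simp [Matrix.trace, Matrix.mul_apply, Matrix.diagonal, mul_comm]
    -- trace (T * Tᴴ)
    have hS : (T * Tᴴ).trace = ∑ j, ∑ k, star (x j) * x k * (A j k * star (A j k)) := by
      rw [hTH, hTdef]
      rw [show B * Matrix.diagonal x * Bᴴ * (B * Matrix.diagonal (star x) * Bᴴ)
          = B * (Matrix.diagonal x * (Bᴴ * B) * Matrix.diagonal (star x) * Bᴴ) by
        simp only [Matrix.mul_assoc]]
      rw [Matrix.trace_mul_comm, ← hB]
      rw [show Matrix.diagonal x * A * Matrix.diagonal (star x) * Bᴴ * B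
          = Matrix.diagonal x * A * Matrix.diagonal (star x) * (Bᴴ * B) from Matrix.mul_assoc _ _ _,
        ← hB]
      simp only [Matrix.trace, Matrix.diag_apply, Matrix.mul_apply, Matrix.diagonal_apply,
        Pi.star_apply, ite_mul, mul_ite, zero_mul, mul_zero, Finset.sum_ite_eq, Finset.sum_ite_eq',
        Finset.mem_univ, if_true]
      rw [Finset.sum_comm]
      refine Finset.sum_congr rfl fun j _ => Finset.sum_congr rfl fun k _ => ?_
      rw [show A k j = star (A j k) from by rw [← herm.apply j k, star_star]]
      ring
    have habs : ∀ z : ℂ, ((‖z‖ ^ 2 : ℝ) : ℂ) = z * star z := by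
      intro z
      rw [Complex.sq_norm, Complex.star_def, Complex.mul_conj]
    have hstart : star T.trace = ∑ j, star (x j) * A j j := by
      rw [htrace, star_sum]
      refine Finset.sum_congr rfl fun j _ => ?_
      rw [star_mul', show star (A j j) = A j j from herm.apply j j]
    have expand : dotProduct (star x) ((Matrix.of fun j k : Fin n =>
        ((‖A j k‖ ^ 2 : ℝ) : ℂ) - (1 / n : ℂ) * A j j * A k k).mulVec x)
        = (T * Tᴴ).trace - (1/n : ℂ) * (star T.trace * T.trace) := by
      rw [hS, hstart, htrace, Finset.sum_mul_sum]
      simp only [dotProduct, Matrix.mulVec, Matrix.of_apply, Pi.star_apply,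
        Finset.mul_sum]
      rw [← Finset.sum_sub_distrib]
      refine Finset.sum_congr rfl fun j _ => ?_
      rw [← Finset.sum_sub_distrib]
      refine Finset.sum_congr rfl fun k _ => ?_
      rw [habs]
      ring
    rw [expand]
    have hSreal : (T * Tᴴ).trace = ((∑ i, ∑ l, Complex.normSq (T i l) : ℝ) : ℂ) := by
      simp only [Matrix.trace, Matrix.diag_apply, Matrix.mul_apply, Matrix.conjTranspose_apply,
        Complex.star_def, Complex.mul_conj, Complex.ofReal_sum]
    have httr : star T.trace * T.trace = ((Complex.normSq T.trace : ℝ) : ℂ) := by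
      rw [Complex.star_def, mul_comm, Complex.mul_conj]
    rw [hSreal, httr, show (1/(n:ℂ)) = (((1/(n:ℝ)) : ℝ) : ℂ) by push_cast; ring,
      ← Complex.ofReal_mul, ← Complex.ofReal_sub, Complex.zero_le_real, sub_nonneg]
    have htr : T.trace = ∑ i, T i i := rfl
    have key : Complex.normSq T.trace ≤ (n:ℝ) * ∑ i, ∑ l, Complex.normSq (T i l) := by
      have h1 : ‖T.trace‖ ≤ ∑ i, ‖T i i‖ := by
        rw [htr]; exact norm_sum_le _ _
      have h2 : (∑ i, ‖T i i‖)^2 ≤ (n:ℝ) * ∑ i, ‖T i i‖^2 := by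
        have := Finset.sum_mul_sq_le_sq_mul_sq Finset.univ (fun _ : Fin n => (1:ℝ))
          (fun i => ‖T i i‖)
        simpa using this
      have h3 : (∑ i, ‖T i i‖^2) ≤ ∑ i, ∑ l, ‖T i l‖^2 :=
        Finset.sum_le_sum fun i _ =>
          Finset.single_le_sum (f := fun l => ‖T i l‖^2)
            (fun l _ => sq_nonneg _) (Finset.mem_univ i)
      calc Complex.normSq T.trace = ‖T.trace‖ ^ 2 := (Complex.sq_norm _).symm
        _ ≤ (∑ i, ‖T i i‖)^2 := pow_le_pow_left₀ (norm_nonneg _) h1 2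
        _ ≤ (n:ℝ) * ∑ i, ‖T i i‖^2 := h2
        _ ≤ (n:ℝ) * ∑ i, ∑ l, ‖T i l‖^2 :=
            mul_le_mul_of_nonneg_left h3 (Nat.cast_nonneg n)
        _ = (n:ℝ) * ∑ i, ∑ l, Complex.normSq (T i l) := by simp [Complex.sq_norm]
    have hnR : (0:ℝ) < (n:ℝ) := by exact_mod_cast hn
    calc (1/(n:ℝ)) * Complex.normSq T.trace
        ≤ (1/(n:ℝ)) * ((n:ℝ) * ∑ i, ∑ l, Complex.normSq (T i l)) :=
          mul_le_mul_of_nonneg_left key (by positivity)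
      _ = ∑ i, ∑ l, Complex.normSq (T i l) := by field_simp
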